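/- Let three agents have additive valuations v_1, v_2, v_3 over a finite set M, and for each agent i let P^i = (B_1^i, B_2^i, B_3^i) be a partition of M into three bundles such that no two of the partitions P^1, P^2, P^3 are fully intersecting. Then there exists a partition (A_1, A_2, A_3) of M such that v_i(A_i) ≥ min(v_i(B_1^i), v_i(B_2^i), v_i(B_3^i)) for every agent i. -/

import Mathlib

theorem nfif_build {M : Type*} [Fintype M] [DecidableEq M]
    (w : Fin 3 → M → ℝ) (hw : ∀ i e, 0 ≤ w i e) (m : Fin 3 → ℝ)
    (S0 S1 S2 : Finset M) (h01 : Disjoint S0 S1) (h02 : Disjoint S0 S2)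
    (h12 : Disjoint S1 S2)
    (hv0 : m 0 ≤ ∑ e ∈ S0, w 0 e) (hv1 : m 1 ≤ ∑ e ∈ S1, w 1 e)
    (hv2 : m 2 ≤ ∑ e ∈ S2, w 2 e) :
    ∃ A : Fin 3 → Finset M,
      (∀ i j : Fin 3, i ≠ j → Disjoint (A i) (A j)) ∧
      Finset.univ.biUnion A = Finset.univ ∧
      ∀ i : Fin 3, m i ≤ ∑ e ∈ A i, w i e := by
  classical
  have hA0 : Disjoint S0 (Finset.univ \ (S0 ∪ S1)) :=
    (Finset.sdiff_disjoint.mono_right Finset.subset_union_left).symm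
  have hA1 : Disjoint S1 (Finset.univ \ (S0 ∪ S1)) :=
    (Finset.sdiff_disjoint.mono_right Finset.subset_union_right).symm
  have hA0' := hA0.symm
  have hA1' := hA1.symm
  have h01' := h01.symm
  refine ⟨fun i => if i = 0 then S0 else if i = 1 then S1 else Finset.univ \ (S0 ∪ S1),
    ?_, ?_, ?_⟩
  · intro i j hij
    fin_cases i <;> fin_cases j <;> simp_all
  · ext x
    simp only [Finset.mem_biUnion, Finset.mem_univ, true_and, iff_true]
    by_cases h0 : x ∈ S0
    · exact ⟨0, by simp [h0]⟩
    · by_cases h1 : x ∈ S1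
      · exact ⟨1, by simp [h1]⟩
      · exact ⟨2, by simp [Finset.mem_sdiff, h0, h1]⟩
  · have hsub : S2 ⊆ Finset.univ \ (S0 ∪ S1) :=
      Finset.subset_sdiff.mpr ⟨Finset.subset_univ _,
        Finset.disjoint_union_right.mpr ⟨h02.symm, h12.symm⟩⟩
    have hmono : (∑ e ∈ S2, w 2 e) ≤ ∑ e ∈ Finset.univ \ (S0 ∪ S1), w 2 e :=
      Finset.sum_le_sum_of_subset_of_nonneg hsub (fun e _ _ => hw 2 e)
    intro i
    fin_cases i
    · simpa using hv0
    · simpa using hv1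
    · simpa using le_trans hv2 hmono

theorem nfif_aux {M : Type*} [Fintype M] [DecidableEq M]
    (w : Fin 3 → M → ℝ) (hw : ∀ i e, 0 ≤ w i e)
    (P : Fin 3 → Fin 3 → Finset M)
    (hPdisj : ∀ i, ∀ a b : Fin 3, a ≠ b → Disjoint (P i a) (P i b))
    (hPcover : ∀ i, Finset.univ.biUnion (P i) = Finset.univ)
    (m : Fin 3 → ℝ)
    (hm : ∀ i a, m i ≤ ∑ e ∈ P i a, w i e)
    (a₀ b₀ : Fin 3) (hd0 : Disjoint (P 0 a₀) (P 1 b₀))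
    (a₁ c₁ : Fin 3) (hd1 : Disjoint (P 0 a₁) (P 2 c₁))
    (b₂ c₂ : Fin 3) (hd2 : Disjoint (P 1 b₂) (P 2 c₂)) :
    ∃ A : Fin 3 → Finset M,
      (∀ i j : Fin 3, i ≠ j → Disjoint (A i) (A j)) ∧
      Finset.univ.biUnion A = Finset.univ ∧
      ∀ i : Fin 3, m i ≤ ∑ e ∈ A i, w i e := by
  classical
  -- basic helpers
  have hmono : ∀ (i : Fin 3) {T T' : Finset M}, T ⊆ T' →
      (∑ e ∈ T, w i e) ≤ ∑ e ∈ T', w i e := fun i {T T'} h =>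
    Finset.sum_le_sum_of_subset_of_nonneg h (fun e _ _ => hw i e)
  have hsd : ∀ (i : Fin 3) (T : Finset M),
      (∑ e ∈ Finset.univ \ T, w i e) = (∑ e ∈ Finset.univ, w i e) - ∑ e ∈ T, w i e := by
    intro i T
    have h := Finset.sum_sdiff (f := w i) (Finset.subset_univ T)
    linarith
  have key : ∀ (i j : Fin 3), (∑ e ∈ Finset.univ, w i e)
      = ∑ x : Fin 3, ∑ e ∈ P j x, w i e := by
    intro i j
    rw [← hPcover j, Finset.sum_biUnion]
    intro a _ b _ hab
    exact hPdisj j a b hab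
  have htot : ∀ i : Fin 3, 3 * m i ≤ ∑ e ∈ Finset.univ, w i e := by
    intro i
    rw [key i i]
    have h := Finset.card_nsmul_le_sum Finset.univ
      (fun x : Fin 3 => ∑ e ∈ P i x, w i e) (m i) (fun x _ => hm i x)
    have hc : (Finset.univ : Finset (Fin 3)).card = 3 := by simp
    rw [hc, nsmul_eq_mul] at h
    push_cast at h
    linarith
  have hcompl : ∀ (i a : Fin 3), 2 * m i ≤ ∑ e ∈ Finset.univ \ P i a, w i e := by
    intro i a
    rw [hsd, key i i]
    have h := Finset.card_nsmul_le_sum (Finset.univ.erase a)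
      (fun x : Fin 3 => ∑ e ∈ P i x, w i e) (m i) (fun x _ => hm i x)
    have hc : ((Finset.univ : Finset (Fin 3)).erase a).card = 2 := by
      rw [Finset.card_erase_of_mem (Finset.mem_univ a)]
      simp
    rw [hc, nsmul_eq_mul] at h
    have hsum : (∑ x ∈ Finset.univ.erase a, ∑ e ∈ P i x, w i e)
        + (∑ e ∈ P i a, w i e) = ∑ x : Fin 3, ∑ e ∈ P i x, w i e :=
      Finset.sum_erase_add _ _ (Finset.mem_univ a)
    push_cast at h
    linarith
  have hsplit : ∀ (i : Fin 3) (X Y : Finset M), Disjoint X Y →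
      (∑ e ∈ Finset.univ \ X, w i e)
        = (∑ e ∈ Y, w i e) + ∑ e ∈ Finset.univ \ (X ∪ Y), w i e := by
    intro i X Y hXY
    have hYs : Y ⊆ Finset.univ \ X :=
      Finset.subset_sdiff.mpr ⟨Finset.subset_univ _, hXY.symm⟩
    have h := Finset.sum_sdiff (f := w i) hYs
    have he : (Finset.univ \ X) \ Y = Finset.univ \ (X ∪ Y) := by
      ext x
      simp only [Finset.mem_sdiff, Finset.mem_union, Finset.mem_univ, true_and]
      tauto
    rw [he] at h
    linarith
  have hunion : ∀ (i : Fin 3) (X Y : Finset M), Disjoint X Y →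
      (∑ e ∈ X ∪ Y, w i e) = (∑ e ∈ X, w i e) + ∑ e ∈ Y, w i e :=
    fun i X Y h => Finset.sum_union h
  have hdisj1 : ∀ X Y : Finset M, Disjoint X (Finset.univ \ (X ∪ Y)) :=
    fun X Y => (Finset.sdiff_disjoint.mono_right Finset.subset_union_left).symm
  have hdisj2 : ∀ X Y : Finset M, Disjoint Y (Finset.univ \ (X ∪ Y)) :=
    fun X Y => (Finset.sdiff_disjoint.mono_right Finset.subset_union_right).symm
  have hthird : ∀ a b : Fin 3, ∃ c : Fin 3, c ≠ a ∧ c ≠ b := by decide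
  have build := nfif_build w hw m
  by_contra hcon
  -- ===== pair (0,1): X1 = P 0 a₀, X2 = P 1 b₀, R = univ \ (X1 ∪ X2) =====
  have hs1 : ∑ e ∈ Finset.univ \ (P 0 a₀ ∪ P 1 b₀), w 2 e < m 2 := by
    by_contra h
    push_neg at h
    exact hcon (build (P 0 a₀) (P 1 b₀) _ hd0 (hdisj1 _ _) (hdisj2 _ _)
      (hm 0 a₀) (hm 1 b₀) h)
  have hs1' : m 2 ≤ ∑ e ∈ P 0 a₀, w 2 e ∨ m 2 ≤ ∑ e ∈ P 1 b₀, w 2 e := by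
    by_contra h
    push_neg at h
    have h1 := hsd 2 (P 0 a₀ ∪ P 1 b₀)
    have h2 := hunion 2 (P 0 a₀) (P 1 b₀) hd0
    have h3 := htot 2
    linarith [h.1, h.2]
  have hF : (∑ e ∈ Finset.univ \ (P 0 a₀ ∪ P 1 b₀), w 0 e < m 0)
      ∧ (m 0 ≤ ∑ e ∈ P 1 b₀, w 0 e) ∧ (m 1 ≤ ∑ e ∈ P 0 a₀, w 1 e) := by
    rcases hs1' with hA | hB
    · have hs2 : ∑ e ∈ Finset.univ \ (P 0 a₀ ∪ P 1 b₀), w 0 e < m 0 := by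
        by_contra h
        push_neg at h
        exact hcon (build _ (P 1 b₀) (P 0 a₀) (hdisj2 _ _).symm (hdisj1 _ _).symm
          hd0.symm h (hm 1 b₀) hA)
      have hF2 : m 0 ≤ ∑ e ∈ P 1 b₀, w 0 e := by
        have h1 := hsplit 0 (P 0 a₀) (P 1 b₀) hd0
        have h2 := hcompl 0 a₀
        linarith
      have hs3 : ∑ e ∈ Finset.univ \ (P 0 a₀ ∪ P 1 b₀), w 1 e < m 1 := by
        by_contra h
        push_neg at h
        exact hcon (build (P 1 b₀) _ (P 0 a₀) (hdisj2 _ _) hd0.symm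
          (hdisj1 _ _).symm hF2 h hA)
      have hF3 : m 1 ≤ ∑ e ∈ P 0 a₀, w 1 e := by
        have h1 := hsplit 1 (P 1 b₀) (P 0 a₀) hd0.symm
        rw [Finset.union_comm (P 1 b₀) (P 0 a₀)] at h1
        have h2 := hcompl 1 b₀
        linarith
      exact ⟨hs2, hF2, hF3⟩
    · have hs4 : ∑ e ∈ Finset.univ \ (P 0 a₀ ∪ P 1 b₀), w 1 e < m 1 := by
        by_contra h
        push_neg at h
        exact hcon (build (P 0 a₀) _ (P 1 b₀) (hdisj1 _ _) hd0
          (hdisj2 _ _).symm (hm 0 a₀) h hB)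
      have hF3 : m 1 ≤ ∑ e ∈ P 0 a₀, w 1 e := by
        have h1 := hsplit 1 (P 1 b₀) (P 0 a₀) hd0.symm
        rw [Finset.union_comm (P 1 b₀) (P 0 a₀)] at h1
        have h2 := hcompl 1 b₀
        linarith
      have hs5 : ∑ e ∈ Finset.univ \ (P 0 a₀ ∪ P 1 b₀), w 0 e < m 0 := by
        by_contra h
        push_neg at h
        exact hcon (build _ (P 0 a₀) (P 1 b₀) (hdisj1 _ _).symm (hdisj2 _ _).symm
          hd0 h hF3 hB)
      have hF2 : m 0 ≤ ∑ e ∈ P 1 b₀, w 0 e := by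
        have h1 := hsplit 0 (P 0 a₀) (P 1 b₀) hd0
        have h2 := hcompl 0 a₀
        linarith
      exact ⟨hs5, hF2, hF3⟩
  obtain ⟨hF4, hF2, hF3⟩ := hF
  -- ===== pair (0,2): B = P 0 a₁, C = P 2 c₁, R' = univ \ (B ∪ C) =====
  have ht1 : ∑ e ∈ Finset.univ \ (P 0 a₁ ∪ P 2 c₁), w 1 e < m 1 := by
    by_contra h
    push_neg at h
    exact hcon (build (P 0 a₁) _ (P 2 c₁) (hdisj1 _ _) hd1 (hdisj2 _ _).symm
      (hm 0 a₁) h (hm 2 c₁))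
  have ht1' : m 1 ≤ ∑ e ∈ P 0 a₁, w 1 e ∨ m 1 ≤ ∑ e ∈ P 2 c₁, w 1 e := by
    by_contra h
    push_neg at h
    have h1 := hsd 1 (P 0 a₁ ∪ P 2 c₁)
    have h2 := hunion 1 (P 0 a₁) (P 2 c₁) hd1
    have h3 := htot 1
    linarith [h.1, h.2]
  have hG : (m 0 ≤ ∑ e ∈ P 2 c₁, w 0 e) ∧ (m 2 ≤ ∑ e ∈ P 0 a₁, w 2 e) := by
    rcases ht1' with hB | hC
    · have ht2 : ∑ e ∈ Finset.univ \ (P 0 a₁ ∪ P 2 c₁), w 0 e < m 0 := by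
        by_contra h
        push_neg at h
        exact hcon (build _ (P 0 a₁) (P 2 c₁) (hdisj1 _ _).symm (hdisj2 _ _).symm
          hd1 h hB (hm 2 c₁))
      have hG1 : m 0 ≤ ∑ e ∈ P 2 c₁, w 0 e := by
        have h1 := hsplit 0 (P 0 a₁) (P 2 c₁) hd1
        have h2 := hcompl 0 a₁
        linarith
      have ht3 : ∑ e ∈ Finset.univ \ (P 0 a₁ ∪ P 2 c₁), w 2 e < m 2 := by
        by_contra h
        push_neg at h
        exact hcon (build (P 2 c₁) (P 0 a₁) _ hd1.symm (hdisj2 _ _) (hdisj1 _ _)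
          hG1 hB h)
      have hG2 : m 2 ≤ ∑ e ∈ P 0 a₁, w 2 e := by
        have h1 := hsplit 2 (P 2 c₁) (P 0 a₁) hd1.symm
        rw [Finset.union_comm (P 2 c₁) (P 0 a₁)] at h1
        have h2 := hcompl 2 c₁
        linarith
      exact ⟨hG1, hG2⟩
    · have ht4 : ∑ e ∈ Finset.univ \ (P 0 a₁ ∪ P 2 c₁), w 2 e < m 2 := by
        by_contra h
        push_neg at h
        exact hcon (build (P 0 a₁) (P 2 c₁) _ hd1 (hdisj1 _ _) (hdisj2 _ _)
          (hm 0 a₁) hC h)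
      have hG2 : m 2 ≤ ∑ e ∈ P 0 a₁, w 2 e := by
        have h1 := hsplit 2 (P 2 c₁) (P 0 a₁) hd1.symm
        rw [Finset.union_comm (P 2 c₁) (P 0 a₁)] at h1
        have h2 := hcompl 2 c₁
        linarith
      have ht5 : ∑ e ∈ Finset.univ \ (P 0 a₁ ∪ P 2 c₁), w 0 e < m 0 := by
        by_contra h
        push_neg at h
        exact hcon (build _ (P 2 c₁) (P 0 a₁) (hdisj2 _ _).symm (hdisj1 _ _).symm
          hd1.symm h hC hG2)
      have hG1 : m 0 ≤ ∑ e ∈ P 2 c₁, w 0 e := by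
        have h1 := hsplit 0 (P 0 a₁) (P 2 c₁) hd1
        have h2 := hcompl 0 a₁
        linarith
      exact ⟨hG1, hG2⟩
  obtain ⟨hG1, hG2⟩ := hG
  -- ===== pair (1,2): B' = P 1 b₂, C' = P 2 c₂, R'' = univ \ (B' ∪ C') =====
  have hu1 : ∑ e ∈ Finset.univ \ (P 1 b₂ ∪ P 2 c₂), w 0 e < m 0 := by
    by_contra h
    push_neg at h
    exact hcon (build _ (P 1 b₂) (P 2 c₂) (hdisj1 _ _).symm (hdisj2 _ _).symm
      hd2 h (hm 1 b₂) (hm 2 c₂))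
  have hu1' : m 0 ≤ ∑ e ∈ P 1 b₂, w 0 e ∨ m 0 ≤ ∑ e ∈ P 2 c₂, w 0 e := by
    by_contra h
    push_neg at h
    have h1 := hsd 0 (P 1 b₂ ∪ P 2 c₂)
    have h2 := hunion 0 (P 1 b₂) (P 2 c₂) hd2
    have h3 := htot 0
    linarith [h.1, h.2]
  have hH : (m 1 ≤ ∑ e ∈ P 2 c₂, w 1 e) ∧ (m 2 ≤ ∑ e ∈ P 1 b₂, w 2 e) := by
    rcases hu1' with hB | hC
    · have hu2 : ∑ e ∈ Finset.univ \ (P 1 b₂ ∪ P 2 c₂), w 1 e < m 1 := by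
        by_contra h
        push_neg at h
        exact hcon (build (P 1 b₂) _ (P 2 c₂) (hdisj1 _ _) hd2 (hdisj2 _ _).symm
          hB h (hm 2 c₂))
      have hH1 : m 1 ≤ ∑ e ∈ P 2 c₂, w 1 e := by
        have h1 := hsplit 1 (P 1 b₂) (P 2 c₂) hd2
        have h2 := hcompl 1 b₂
        linarith
      have hu3 : ∑ e ∈ Finset.univ \ (P 1 b₂ ∪ P 2 c₂), w 2 e < m 2 := by
        by_contra h
        push_neg at h
        exact hcon (build (P 1 b₂) (P 2 c₂) _ hd2 (hdisj1 _ _) (hdisj2 _ _)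
          hB hH1 h)
      have hH2 : m 2 ≤ ∑ e ∈ P 1 b₂, w 2 e := by
        have h1 := hsplit 2 (P 2 c₂) (P 1 b₂) hd2.symm
        rw [Finset.union_comm (P 2 c₂) (P 1 b₂)] at h1
        have h2 := hcompl 2 c₂
        linarith
      exact ⟨hH1, hH2⟩
    · have hu4 : ∑ e ∈ Finset.univ \ (P 1 b₂ ∪ P 2 c₂), w 2 e < m 2 := by
        by_contra h
        push_neg at h
        exact hcon (build (P 2 c₂) (P 1 b₂) _ hd2.symm (hdisj2 _ _) (hdisj1 _ _)
          hC (hm 1 b₂) h)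
      have hH2 : m 2 ≤ ∑ e ∈ P 1 b₂, w 2 e := by
        have h1 := hsplit 2 (P 2 c₂) (P 1 b₂) hd2.symm
        rw [Finset.union_comm (P 2 c₂) (P 1 b₂)] at h1
        have h2 := hcompl 2 c₂
        linarith
      have hu5 : ∑ e ∈ Finset.univ \ (P 1 b₂ ∪ P 2 c₂), w 1 e < m 1 := by
        by_contra h
        push_neg at h
        exact hcon (build (P 2 c₂) _ (P 1 b₂) (hdisj2 _ _) hd2.symm
          (hdisj1 _ _).symm hC h hH2)
      have hH1 : m 1 ≤ ∑ e ∈ P 2 c₂, w 1 e := by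
        have h1 := hsplit 1 (P 1 b₂) (P 2 c₂) hd2
        have h2 := hcompl 1 b₂
        linarith
      exact ⟨hH1, hH2⟩
  obtain ⟨hH1, hH2⟩ := hH
  -- ===== leaves =====
  by_cases hBa : a₁ = a₀
  · by_cases hBb : b₂ = b₀
    · by_cases hCc : c₂ = c₁
      · -- final contradiction : C ⊆ R
        rw [hBa] at hd1
        rw [hBb, hCc] at hd2
        have hsub : P 2 c₁ ⊆ Finset.univ \ (P 0 a₀ ∪ P 1 b₀) :=
          Finset.subset_sdiff.mpr ⟨Finset.subset_univ _,
            Finset.disjoint_union_right.mpr ⟨hd1.symm, hd2.symm⟩⟩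
        have := hmono 0 hsub
        linarith
      · obtain ⟨z, hz1, hz2⟩ := hthird c₁ c₂
        exact hcon (build (P 2 c₁) (P 2 c₂) (P 2 z)
          (hPdisj 2 c₁ c₂ (fun h => hCc h.symm))
          (hPdisj 2 c₁ z (fun h => hz1 h.symm))
          (hPdisj 2 c₂ z (fun h => hz2 h.symm)) hG1 hH1 (hm 2 z))
    · obtain ⟨z, hz1, hz2⟩ := hthird b₀ b₂
      exact hcon (build (P 1 b₀) (P 1 z) (P 1 b₂)
        (hPdisj 1 b₀ z (fun h => hz1 h.symm))
        (hPdisj 1 b₀ b₂ (fun h => hBb h.symm))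
        (hPdisj 1 z b₂ hz2) hF2 (hm 1 z) hH2)
  · obtain ⟨z, hz1, hz2⟩ := hthird a₀ a₁
    exact hcon (build (P 0 z) (P 0 a₀) (P 0 a₁)
      (hPdisj 0 z a₀ hz1) (hPdisj 0 z a₁ hz2)
      (hPdisj 0 a₀ a₁ (fun h => hBa h.symm)) (hm 0 z) hF3 hG2)

/-- Three agents with additive valuations `w i`, each with a 3-bundle partition `P i`
of the items, such that no two of the partitions are fully intersecting (fully
intersecting meaning every bundle of one intersects every bundle of the other).
Then there is an allocation giving each agent `i` a bundle of value at least the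
minimum value (by `w i`) of a bundle in her own partition `P i`. -/
theorem not_fully_intersecting_implies_feasible {M : Type*} [Fintype M] [DecidableEq M]
    (w : Fin 3 → M → ℝ) (hw : ∀ i e, 0 ≤ w i e)
    (P : Fin 3 → Fin 3 → Finset M)
    (hPdisj : ∀ i, ∀ a b : Fin 3, a ≠ b → Disjoint (P i a) (P i b))
    (hPcover : ∀ i, Finset.univ.biUnion (P i) = Finset.univ)
    (hNFI : ∀ i j : Fin 3, i ≠ j → ¬ (∀ a b : Fin 3, ((P i a) ∩ (P j b)).Nonempty)) :
    ∃ A : Fin 3 → Finset M,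
      (∀ i j : Fin 3, i ≠ j → Disjoint (A i) (A j)) ∧
      Finset.univ.biUnion A = Finset.univ ∧
      ∀ i : Fin 3,
        min (min (∑ e ∈ P i 0, w i e) (∑ e ∈ P i 1, w i e)) (∑ e ∈ P i 2, w i e)
          ≤ ∑ e ∈ A i, w i e := by
  have h01 := hNFI 0 1 (by decide)
  have h02 := hNFI 0 2 (by decide)
  have h12 := hNFI 1 2 (by decide)
  push_neg at h01 h02 h12
  obtain ⟨a₀, b₀, h0⟩ := h01
  obtain ⟨a₁, c₁, h1⟩ := h02
  obtain ⟨b₂, c₂, h2⟩ := h12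
  have hd0 : Disjoint (P 0 a₀) (P 1 b₀) :=
    Finset.disjoint_iff_inter_eq_empty.mpr h0
  have hd1 : Disjoint (P 0 a₁) (P 2 c₁) :=
    Finset.disjoint_iff_inter_eq_empty.mpr h1
  have hd2 : Disjoint (P 1 b₂) (P 2 c₂) :=
    Finset.disjoint_iff_inter_eq_empty.mpr h2
  exact nfif_aux w hw P hPdisj hPcover
    (fun i => min (min (∑ e ∈ P i 0, w i e) (∑ e ∈ P i 1, w i e)) (∑ e ∈ P i 2, w i e))
    (by
      intro i a
      fin_cases a
      · exact (min_le_left _ _).trans (min_le_left _ _)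
      · exact (min_le_left _ _).trans (min_le_right _ _)
      · exact min_le_right _ _)
    a₀ b₀ hd0 a₁ c₁ hd1 b₂ c₂ hd2
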